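/- Let p₁, p₂, p₃ be any three points in the Euclidean plane EuclideanSpace ℝ (Fin 2). Set a = dist p₂ p₃, b = dist p₁ p₃, c = dist p₁ p₂ and s = (a + b + c)/2. Then the area of the triangle with vertices p₁, p₂, p₃, i.e. (MeasureTheory.volume (convexHull ℝ {p₁, p₂, p₃})).toReal, equals Real.sqrt (s * (s − a) * (s − b) * (s − c)). -/

import Mathlib

open MeasureTheory Set Pointwise

theorem heron_aux_volA : (volume : Measure (ℝ × ℝ)) {p : ℝ × ℝ | 0 ≤ p.1 ∧ 0 ≤ p.2 ∧ p.1 + p.2 ≤ 1}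
    = ENNReal.ofReal (1/2) := by
  have hA : MeasurableSet {p : ℝ × ℝ | 0 ≤ p.1 ∧ 0 ≤ p.2 ∧ p.1 + p.2 ≤ 1} :=
    (measurableSet_le measurable_const measurable_fst).inter
      ((measurableSet_le measurable_const measurable_snd).inter
      (measurableSet_le (measurable_fst.add measurable_snd) measurable_const))
  rw [Measure.volume_eq_prod, Measure.prod_apply hA]
  have hsec : ∀ x : ℝ, volume (Prod.mk x ⁻¹' {p : ℝ × ℝ | 0 ≤ p.1 ∧ 0 ≤ p.2 ∧ p.1 + p.2 ≤ 1})
      = Set.indicator (Icc (0:ℝ) 1) (fun x => ENNReal.ofReal (1 - x)) x := by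
    intro x
    rcases le_or_gt 0 x with hx | hx
    · have : Prod.mk x ⁻¹' {p : ℝ × ℝ | 0 ≤ p.1 ∧ 0 ≤ p.2 ∧ p.1 + p.2 ≤ 1} = Icc 0 (1 - x) := by
        ext y; simp [hx]; intro _; constructor <;> intro h <;> linarith
      rw [this, Real.volume_Icc]
      rcases le_or_gt x 1 with hx1 | hx1
      · rw [Set.indicator_of_mem (Set.mem_Icc.2 ⟨hx, hx1⟩)]; norm_num
      · rw [Set.indicator_of_notMem (by simp [hx1.not_ge])]
        rw [ENNReal.ofReal_eq_zero]; linarith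
    · have : Prod.mk x ⁻¹' {p : ℝ × ℝ | 0 ≤ p.1 ∧ 0 ≤ p.2 ∧ p.1 + p.2 ≤ 1} = ∅ := by
        ext y; simp [hx.not_ge]
      rw [this, measure_empty, Set.indicator_of_notMem (by simp [hx.not_ge])]
  simp only [hsec]
  rw [lintegral_indicator measurableSet_Icc]
  have hint : IntegrableOn (fun x : ℝ => 1 - x) (Icc 0 1) volume :=
    (continuous_const.sub continuous_id).integrableOn_Icc
  rw [← ofReal_integral_eq_lintegral_ofReal hint
      ((ae_restrict_iff' measurableSet_Icc).2 (ae_of_all _ fun x hx => by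
        simp only [Pi.zero_apply]; linarith [hx.2]))]
  congr 1
  rw [MeasureTheory.integral_Icc_eq_integral_Ioc, ← intervalIntegral.integral_of_le zero_le_one]
  rw [intervalIntegral.integral_sub intervalIntegrable_const intervalIntegral.intervalIntegrable_id,
    intervalIntegral.integral_const, integral_id]
  norm_num

theorem heron_aux_volT : (volume : Measure (Fin 2 → ℝ)) {x : Fin 2 → ℝ | 0 ≤ x 0 ∧ 0 ≤ x 1 ∧ x 0 + x 1 ≤ 1}
    = ENNReal.ofReal (1/2) := by
  have hA : MeasurableSet {p : ℝ × ℝ | 0 ≤ p.1 ∧ 0 ≤ p.2 ∧ p.1 + p.2 ≤ 1} :=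
    (measurableSet_le measurable_const measurable_fst).inter
      ((measurableSet_le measurable_const measurable_snd).inter
      (measurableSet_le (measurable_fst.add measurable_snd) measurable_const))
  have h := (volume_preserving_finTwoArrow ℝ).measure_preimage hA.nullMeasurableSet
  have : (MeasurableEquiv.finTwoArrow ⁻¹' {p : ℝ × ℝ | 0 ≤ p.1 ∧ 0 ≤ p.2 ∧ p.1 + p.2 ≤ 1})
      = {x : Fin 2 → ℝ | 0 ≤ x 0 ∧ 0 ≤ x 1 ∧ x 0 + x 1 ≤ 1} := rfl
  rw [this] at h
  rw [h, heron_aux_volA]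

theorem heron_aux_hullT : convexHull ℝ ({0, ![1,0], ![0,1]} : Set (Fin 2 → ℝ))
    = {x : Fin 2 → ℝ | 0 ≤ x 0 ∧ 0 ≤ x 1 ∧ x 0 + x 1 ≤ 1} := by
  apply Subset.antisymm
  · apply convexHull_min
    · rintro x (rfl | rfl | rfl) <;> norm_num
    · rintro x ⟨hx0, hx1, hx2⟩ y ⟨hy0, hy1, hy2⟩ a b ha hb hab
      refine ⟨?_, ?_, ?_⟩ <;>
        simp only [Pi.add_apply, Pi.smul_apply, smul_eq_mul] <;> nlinarith
  · rintro x ⟨hx0, hx1, hx2⟩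
    have hx : x = (1 - x 0 - x 1) • (0 : Fin 2 → ℝ) + x 0 • ![1,0] + x 1 • ![0,1] := by
      funext i
      fin_cases i <;> simp
    rw [hx]
    have := Convex.sum_mem (convex_convexHull ℝ ({0, ![1,0], ![0,1]} : Set (Fin 2 → ℝ)))
      (t := Finset.univ) (w := ![1 - x 0 - x 1, x 0, x 1]) (z := ![0, ![1,0], ![0,1]])
      (fun i _ => by fin_cases i <;> simp <;> linarith)
      (by simp [Fin.sum_univ_three]; ring)
      (fun i _ => by fin_cases i <;> simp [subset_convexHull ℝ _ (by norm_num : (0:Fin 2 → ℝ) ∈ ({0, ![1,0], ![0,1]} : Set (Fin 2 → ℝ)))] <;>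
        exact subset_convexHull ℝ _ (by norm_num))
    simpa [Fin.sum_univ_three] using this

theorem heron_aux_triArea (q₁ q₂ q₃ : Fin 2 → ℝ) :
    volume (convexHull ℝ ({q₁, q₂, q₃} : Set (Fin 2 → ℝ)))
      = ENNReal.ofReal (|(q₂ 0 - q₁ 0) * (q₃ 1 - q₁ 1) - (q₃ 0 - q₁ 0) * (q₂ 1 - q₁ 1)| / 2) := by
  set v : Fin 2 → ℝ := q₂ - q₁ with hv
  set w : Fin 2 → ℝ := q₃ - q₁ with hw
  set L : (Fin 2 → ℝ) →ₗ[ℝ] (Fin 2 → ℝ) := Matrix.toLin' !![v 0, w 0; v 1, w 1] with hL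
  have hL0 : L 0 = 0 := map_zero L
  have hLv : L ![1,0] = v := by
    funext i
    fin_cases i <;>
      simp [hL, Matrix.toLin'_apply, Matrix.mulVec, dotProduct, Fin.sum_univ_two]
  have hLw : L ![0,1] = w := by
    funext i
    fin_cases i <;>
      simp [hL, Matrix.toLin'_apply, Matrix.mulVec, dotProduct, Fin.sum_univ_two]
  have hset : ({q₁, q₂, q₃} : Set (Fin 2 → ℝ)) = q₁ +ᵥ (L '' {0, ![1,0], ![0,1]}) := by
    rw [Set.image_insert_eq, Set.image_insert_eq, Set.image_singleton, hL0, hLv, hLw,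
      ← Set.image_vadd, Set.image_insert_eq, Set.image_insert_eq, Set.image_singleton]
    simp [hv, hw, vadd_eq_add]
  rw [hset, convexHull_vadd, measure_vadd, ← LinearMap.image_convexHull,
    Measure.addHaar_image_linearMap, heron_aux_hullT, heron_aux_volT]
  rw [LinearMap.det_toLin', Matrix.det_fin_two_of]
  rw [← ENNReal.ofReal_mul (abs_nonneg _)]
  congr 1
  simp only [hv, hw, Pi.sub_apply]
  ring_nf

/-- Heron's formula, as stated by Clavius in Book IV, Chapter 2 of the
`Geometria Practica`. -/
theorem heron_formula (p₁ p₂ p₃ : EuclideanSpace ℝ (Fin 2))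
    (a b c s : ℝ)
    (ha : a = dist p₂ p₃) (hb : b = dist p₁ p₃) (hc : c = dist p₁ p₂)
    (hs : s = (a + b + c) / 2) :
    (MeasureTheory.volume (convexHull ℝ ({p₁, p₂, p₃} : Set (EuclideanSpace ℝ (Fin 2))))).toReal
      = Real.sqrt (s * (s - a) * (s - b) * (s - c)) := by
  set e := (MeasurableEquiv.toLp 2 (Fin 2 → ℝ)).symm with he
  set S : Set (EuclideanSpace ℝ (Fin 2)) := convexHull ℝ {p₁, p₂, p₃} with hS
  have hcpt : IsCompact S := ((Set.finite_singleton p₃).insert p₂ |>.insert p₁).isCompact_convexHull ℝ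
  have hmeas : NullMeasurableSet S volume := hcpt.isClosed.measurableSet.nullMeasurableSet
  have h1 : volume S = volume (⇑e '' S) := by
    rw [MeasurableEquiv.image_eq_preimage_symm]
    exact (((EuclideanSpace.volume_preserving_symm_measurableEquiv_toLp (Fin 2)).symm
      (MeasurableEquiv.toLp 2 (Fin 2 → ℝ)).symm).measure_preimage hmeas).symm
  have h2 : ⇑e '' S = convexHull ℝ ({⇑e p₁, ⇑e p₂, ⇑e p₃} : Set (Fin 2 → ℝ)) := by
    have : ⇑e = ⇑(WithLp.linearEquiv 2 ℝ (Fin 2 → ℝ)).toLinearMap := rfl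
    rw [hS, this, LinearMap.image_convexHull]
    rw [Set.image_insert_eq, Set.image_insert_eq, Set.image_singleton]
  have hd : ∀ p : EuclideanSpace ℝ (Fin 2), ∀ i, (⇑e p) i = p i := fun _ _ => rfl
  rw [h1, h2, heron_aux_triArea]
  set d : ℝ := (p₂ 0 - p₁ 0) * (p₃ 1 - p₁ 1) - (p₃ 0 - p₁ 0) * (p₂ 1 - p₁ 1) with hdef
  have harg : (⇑e p₂ 0 - ⇑e p₁ 0) * (⇑e p₃ 1 - ⇑e p₁ 1) - (⇑e p₃ 0 - ⇑e p₁ 0) * (⇑e p₂ 1 - ⇑e p₁ 1) = d := rfl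
  rw [harg, ENNReal.toReal_ofReal (by positivity)]
  -- distances squared
  have hsq : ∀ x y : EuclideanSpace ℝ (Fin 2),
      (dist x y)^2 = (x 0 - y 0)^2 + (x 1 - y 1)^2 := by
    intro x y
    rw [EuclideanSpace.dist_eq, Real.sq_sqrt (by positivity)]
    simp [Fin.sum_univ_two, Real.dist_eq, sq_abs]
  have ha2 : a^2 = (p₂ 0 - p₃ 0)^2 + (p₂ 1 - p₃ 1)^2 := by rw [ha]; exact hsq _ _
  have hb2 : b^2 = (p₁ 0 - p₃ 0)^2 + (p₁ 1 - p₃ 1)^2 := by rw [hb]; exact hsq _ _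
  have hc2 : c^2 = (p₁ 0 - p₂ 0)^2 + (p₁ 1 - p₂ 1)^2 := by rw [hc]; exact hsq _ _
  have key : s * (s - a) * (s - b) * (s - c) = (d / 2)^2 := by
    have expand : s * (s - a) * (s - b) * (s - c)
        = (2*(a^2*b^2) + 2*(b^2*c^2) + 2*(c^2*a^2) - (a^2)^2 - (b^2)^2 - (c^2)^2)/16 := by
      rw [hs]; ring
    rw [expand, ha2, hb2, hc2, hdef]; ring
  rw [key, Real.sqrt_sq_eq_abs, abs_div]
  norm_num
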